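/- If ν = -iλ is a simple purely imaginary eigenvalue of JL with eigenvector u (L Hermitian, J invertible skew-Hermitian), then (J⁻¹u, u) ≠ 0, equivalently (Ku,u) ≠ 0 where K = (iJ)⁻¹. -/

import Mathlib

open Matrix Polynomial

/-- Conjugation invariance of the characteristic polynomial. -/
private lemma my_charpoly_conj {n : ℕ} (A Cm Cm' : Matrix (Fin n) (Fin n) ℂ)
    (h1 : Cm' * Cm = 1) (h2 : Cm * Cm' = 1) :
    (Cm' * A * Cm).charpoly = A.charpoly := by
  classical
  set f : Matrix (Fin n) (Fin n) ℂ →+* Matrix (Fin n) (Fin n) ℂ[X] :=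
    (Polynomial.C : ℂ →+* ℂ[X]).mapMatrix with hf
  have hcomm : ∀ M : Matrix (Fin n) (Fin n) ℂ[X],
      Matrix.scalar (Fin n) (X : ℂ[X]) * M = M * Matrix.scalar (Fin n) (X : ℂ[X]) := by
    intro M
    exact (Matrix.scalar_commute (X : ℂ[X]) (fun r' => Commute.all _ _) M).eq
  have key : charmatrix (Cm' * A * Cm) = f Cm' * charmatrix A * f Cm := by
    have hA : f (Cm' * A * Cm) = f Cm' * f A * f Cm := by
      rw [_root_.map_mul, _root_.map_mul]
    have hX : f Cm' * Matrix.scalar (Fin n) (X : ℂ[X]) * f Cm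
        = Matrix.scalar (Fin n) (X : ℂ[X]) := by
      rw [← hcomm (f Cm'), mul_assoc, ← _root_.map_mul, h1, _root_.map_one, mul_one]
    calc charmatrix (Cm' * A * Cm)
        = Matrix.scalar (Fin n) (X : ℂ[X]) - f (Cm' * A * Cm) := rfl
      _ = f Cm' * Matrix.scalar (Fin n) (X : ℂ[X]) * f Cm - f Cm' * f A * f Cm := by
          rw [hA, hX]
      _ = f Cm' * (Matrix.scalar (Fin n) (X : ℂ[X]) - f A) * f Cm := by
          rw [mul_sub, sub_mul]
      _ = f Cm' * charmatrix A * f Cm := rfl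
  have hdet1 : (f Cm').det * (f Cm).det = 1 := by
    rw [← Matrix.det_mul, ← _root_.map_mul, h1, _root_.map_one, Matrix.det_one]
  rw [Matrix.charpoly, Matrix.charpoly, key, Matrix.det_mul, Matrix.det_mul,
    mul_right_comm, hdet1, one_mul]

/-- If `ν` is an eigenvalue with right eigenvector `u` and left eigenvector `w`
satisfying `w ⬝ᵥ u = 0`, then `(X - ν)^2` divides the characteristic polynomial. -/
private lemma sq_dvd_charpoly {n : ℕ} (A : Matrix (Fin n) (Fin n) ℂ) (ν : ℂ)
    (u w : Fin n → ℂ) (hu : u ≠ 0)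
    (hAu : A *ᵥ u = ν • u) (hwA : w ᵥ* A = ν • w)
    {i₀ : Fin n} (hwi : w i₀ ≠ 0) (hwu : w ⬝ᵥ u = 0) :
    (X - Polynomial.C ν) ^ 2 ∣ A.charpoly := by
  classical
  set e : Fin n → ℂ := Pi.single i₀ 1 with he
  set v : Fin n → ℂ := fun j => if j = i₀ then 0 else w j / w i₀ with hv
  have hvi : v i₀ = 0 := by simp [hv]
  set E : Matrix (Fin n) (Fin n) ℂ := vecMulVec e v with hE
  have hEE : E * E = 0 := by
    ext i j
    simp only [hE, Matrix.mul_apply, vecMulVec_apply, Matrix.zero_apply]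
    refine Finset.sum_eq_zero fun k _ => ?_
    by_cases hk : k = i₀
    · subst hk; simp [hvi]
    · simp [he, Pi.single_apply, hk]
  set Cm : Matrix (Fin n) (Fin n) ℂ := 1 - E with hCm
  set Cm' : Matrix (Fin n) (Fin n) ℂ := 1 + E with hCm'
  have hCC' : Cm * Cm' = 1 := by
    simp only [hCm, hCm', sub_mul, mul_add, mul_one, one_mul, hEE, add_zero]
    abel
  have hC'C : Cm' * Cm = 1 := by
    simp only [hCm, hCm', add_mul, mul_sub, mul_one, one_mul, hEE, sub_zero]
    abel
  set T : Matrix (Fin n) (Fin n) ℂ := Cm' * A * Cm with hT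
  set u' : Fin n → ℂ := Cm' *ᵥ u with hu'def
  have hu'ne : u' ≠ 0 := by
    intro h
    apply hu
    have h2 : Cm *ᵥ u' = u := by rw [hu'def, mulVec_mulVec, hCC', one_mulVec]
    rw [h, mulVec_zero] at h2
    exact h2.symm
  -- v ⬝ᵥ u = -u i₀
  have hv2 : v = (w i₀)⁻¹ • (w - w i₀ • e) := by
    funext j
    by_cases hj : j = i₀
    · subst hj
      simp [hv, he, Pi.single_apply]
    · simp only [hv, if_neg hj, Pi.smul_apply, Pi.sub_apply, he, Pi.single_apply, if_neg hj,
        smul_eq_mul, mul_zero, sub_zero]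
      field_simp
  have hvu : v ⬝ᵥ u = -u i₀ := by
    rw [hv2, smul_dotProduct, sub_dotProduct, smul_dotProduct, hwu, he, single_dotProduct]
    field_simp
    simp [hwi]
  have hEu : E *ᵥ u = (v ⬝ᵥ u) • e := by
    funext i
    simp only [hE, Matrix.mulVec, dotProduct, vecMulVec_apply, Pi.smul_apply, smul_eq_mul]
    rw [Finset.sum_mul]
    exact Finset.sum_congr rfl fun j _ => by ring
  have hu'i₀ : u' i₀ = 0 := by
    have h2 : u' = u + (v ⬝ᵥ u) • e := by rw [hu'def, hCm', add_mulVec, one_mulVec, hEu]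
    rw [h2]
    simp [hvu, he]
  -- w ᵥ* Cm = w i₀ • e
  have hwE : w ᵥ* E = w i₀ • v := by
    funext j
    simp only [Matrix.vecMul, dotProduct, hE, vecMulVec_apply, Pi.smul_apply, smul_eq_mul]
    rw [Finset.sum_eq_single i₀]
    · simp [he]
    · intro k _ hk
      simp [he, Pi.single_apply, hk]
    · intro h; exact absurd (Finset.mem_univ i₀) h
  have hwC : w ᵥ* Cm = w i₀ • e := by
    rw [hCm, vecMul_sub, vecMul_one, hwE]
    funext j
    by_cases hj : j = i₀
    · subst hj; simp [he, hvi]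
    · simp only [Pi.sub_apply, Pi.smul_apply, smul_eq_mul, he, Pi.single_apply, if_neg hj,
        mul_zero, hv]
      field_simp
      simp
  have hev : e + v = (w i₀)⁻¹ • w := by
    funext j
    by_cases hj : j = i₀
    · subst hj; simp [he, hvi]
      field_simp
    · simp only [Pi.add_apply, he, Pi.single_apply, if_neg hj, hv, Pi.smul_apply, smul_eq_mul,
        zero_add]
      rw [div_eq_inv_mul]
  have hrow : T i₀ = ν • e := by
    have h1 : T i₀ = Pi.single i₀ (1 : ℂ) ᵥ* T := (single_one_vecMul i₀ T).symm
    have h2 : Pi.single i₀ (1 : ℂ) ᵥ* Cm' = (w i₀)⁻¹ • w := by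
      rw [hCm', vecMul_add, vecMul_one, single_vecMul]
      have : (1 : ℂ) • E.row i₀ = v := by
        funext j; simp [hE, vecMulVec_apply, he]
      rw [this, ← he, hev]
    rw [h1, hT, ← Matrix.vecMul_vecMul, ← Matrix.vecMul_vecMul, h2, smul_vecMul, hwA,
      smul_vecMul, smul_vecMul, hwC]
    rw [smul_smul, smul_smul]
    rw [show (w i₀)⁻¹ * ν * w i₀ = ν by field_simp]
  have hTu : T *ᵥ u' = ν • u' := by
    have hTC : T * Cm' = Cm' * A := by
      rw [hT, mul_assoc, hCC', mul_one]
    rw [hu'def, mulVec_mulVec, hTC, ← mulVec_mulVec, hAu, mulVec_smul]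
  -- charpoly equality
  have hchar : A.charpoly = T.charpoly := (my_charpoly_conj A Cm Cm' hC'C hCC').symm
  -- factor out (X - C ν) from row i₀
  have hrowc : charmatrix T i₀ = (X - Polynomial.C ν) • (Pi.single i₀ (1 : ℂ[X]) : Fin n → ℂ[X]) := by
    funext j
    by_cases hj : j = i₀
    · subst hj
      rw [charmatrix_apply_eq]
      simp [hrow, he]
    · have hj' : i₀ ≠ j := fun h => hj h.symm
      rw [charmatrix_apply_ne _ _ _ hj']
      simp [hrow, he, Pi.single_apply, hj]
  set S : Matrix (Fin n) (Fin n) ℂ[X] := (charmatrix T).updateRow i₀ (Pi.single i₀ 1) with hS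
  have hfac : T.charpoly = (X - Polynomial.C ν) * S.det := by
    rw [Matrix.charpoly]
    conv_lhs => rw [← Matrix.updateRow_eq_self (charmatrix T) i₀, hrowc]
    rw [Matrix.det_updateRow_smul]
  -- (X - C ν) ∣ S.det
  have hSdvd : (X - Polynomial.C ν) ∣ S.det := by
    rw [dvd_iff_isRoot, IsRoot.def]
    have hmap : Polynomial.eval ν S.det = ((Polynomial.evalRingHom ν).mapMatrix S).det := by
      rw [show Polynomial.eval ν S.det = (Polynomial.evalRingHom ν) S.det from rfl,
        RingHom.map_det]
    rw [hmap, ← Matrix.exists_mulVec_eq_zero_iff]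
    refine ⟨u', hu'ne, ?_⟩
    funext i
    by_cases hi : i = i₀
    · subst hi
      simp only [Matrix.mulVec, dotProduct, RingHom.mapMatrix_apply, Matrix.map_apply,
        hS, Matrix.updateRow_self, Pi.zero_apply]
      rw [Finset.sum_eq_single i]
      · simp [hu'i₀]
      · intro k _ hk
        simp [Pi.single_apply, hk]
      · intro h; exact absurd (Finset.mem_univ i) h
    · have hSrow : ∀ j, ((Polynomial.evalRingHom ν).mapMatrix S) i j
          = (if i = j then ν else 0) - T i j := by
        intro j
        simp only [RingHom.mapMatrix_apply, Matrix.map_apply, hS, Matrix.updateRow_ne hi]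
        rw [charmatrix_apply]
        by_cases hij : i = j
        · subst hij; simp
        · simp [Matrix.diagonal_apply_ne _ hij, hij]
      have : (((Polynomial.evalRingHom ν).mapMatrix S) *ᵥ u') i
          = ν * u' i - (T *ᵥ u') i := by
        simp only [Matrix.mulVec, dotProduct]
        rw [Finset.sum_congr rfl (fun j _ => by rw [hSrow j, sub_mul])]
        rw [Finset.sum_sub_distrib]
        congr 1
        rw [Finset.sum_eq_single i]
        · simp
        · intro k _ hk
          rw [if_neg (fun h => hk h.symm), zero_mul]
        · intro h; exact absurd (Finset.mem_univ i) h
      rw [this, hTu]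
      simp
  rw [hchar, hfac, sq]
  exact mul_dvd_mul_left _ hSdvd

/-- If `ν = -iλ` is a simple purely imaginary eigenvalue of `JL` with eigenvector `u`
(`L` Hermitian, `J` invertible skew-Hermitian), then `(J⁻¹u, u) ≠ 0`. -/
theorem simple_imaginary_eigenvalue_nondegenerate
    (n : ℕ) (L J : Matrix (Fin n) (Fin n) ℂ)
    (hL : Lᴴ = L) (hJ : Jᴴ = -J) (hJinv : IsUnit J.det)
    (lam : ℝ) (u : Fin n → ℂ) (hu : u ≠ 0)
    (heig : (J * L) *ᵥ u = (-(Complex.I * lam)) • u)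
    (hsimple : Polynomial.rootMultiplicity (-(Complex.I * lam)) (Matrix.charpoly (J * L)) = 1) :
    (J⁻¹ *ᵥ u) ⬝ᵥ star u ≠ 0 := by
  classical
  intro h0
  set ν : ℂ := -(Complex.I * lam) with hν
  set A : Matrix (Fin n) (Fin n) ℂ := J * L with hA
  set w : Fin n → ℂ := star u ᵥ* J⁻¹ with hw
  have hJJ' : J * J⁻¹ = 1 := Matrix.mul_nonsing_inv J hJinv
  have hJ'J : J⁻¹ * J = 1 := Matrix.nonsing_inv_mul J hJinv
  -- w ≠ 0
  have hwne : w ≠ 0 := by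
    intro h
    apply hu
    have h2 : w ᵥ* J = star u := by
      rw [hw, Matrix.vecMul_vecMul, hJ'J, vecMul_one]
    rw [h, Matrix.zero_vecMul] at h2
    have := congrArg star h2
    rw [star_zero, star_star] at this
    exact this.symm
  obtain ⟨i₀, hwi⟩ := Function.ne_iff.mp hwne
  -- w ⬝ᵥ u = 0
  have hwu : w ⬝ᵥ u = 0 := by
    rw [hw, ← Matrix.dotProduct_mulVec, dotProduct_comm]
    exact h0
  -- left eigenvector
  have hLu : L *ᵥ u = ν • (J⁻¹ *ᵥ u) := by
    have h1 : J⁻¹ *ᵥ ((J * L) *ᵥ u) = L *ᵥ u := by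
      rw [mulVec_mulVec, ← mul_assoc, hJ'J, one_mul]
    rw [← h1, heig, mulVec_smul, hν]
  have hstarν : star ν = -ν := by
    simp [hν, Complex.ext_iff]
  have hJinvH : (J⁻¹)ᴴ = -J⁻¹ := by
    rw [Matrix.conjTranspose_nonsing_inv, hJ]
    apply Matrix.inv_eq_right_inv
    rw [neg_mul_neg, hJJ']
  have hwA : w ᵥ* A = ν • w := by
    have h1 : w ᵥ* A = star u ᵥ* L := by
      rw [hw, hA, Matrix.vecMul_vecMul, ← mul_assoc, hJ'J, one_mul]
    have h2 : star u ᵥ* L = star (L *ᵥ u) := by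
      rw [Matrix.star_mulVec, hL]
    have h3 : star (L *ᵥ u) = star ν • star (J⁻¹ *ᵥ u) := by
      rw [hLu, star_smul]
    have h4 : star (J⁻¹ *ᵥ u) = -w := by
      rw [Matrix.star_mulVec, hJinvH, Matrix.vecMul_neg, hw]
    rw [h1, h2, h3, h4, hstarν]
    rw [smul_neg, neg_smul, neg_neg]
  have hAu : A *ᵥ u = ν • u := heig
  have hdvd : (X - Polynomial.C ν) ^ 2 ∣ A.charpoly :=
    sq_dvd_charpoly A ν u w hu hAu hwA hwi hwu
  have hne : A.charpoly ≠ 0 := (Matrix.charpoly_monic A).ne_zero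
  have h2le : 2 ≤ Polynomial.rootMultiplicity ν A.charpoly :=
    (Polynomial.le_rootMultiplicity_iff hne).mpr hdvd
  rw [hsimple] at h2le
  omega
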